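/- If A : 2^{<ω} → ℕ is upper semicomputable and there exists a constant d with |{x : A(x) ≤ n}| ≤ 2^{n+d} for all n, then C(x) ≤ A(x) + O(1). -/

import Mathlib

open Set Filter

namespace KC

/-- Length of the binary string identified with the natural number `n`. -/
def len (n : ℕ) : ℕ := Nat.log 2 (n + 1)

/-- Complexity of `x` relative to machine `T`. -/
noncomputable def MachineCplx (T : ℕ →. ℕ) (x : ℕ) : ℕ := sInf {n | ∃ y, len y = n ∧ x ∈ T y}

/-- `U` is an optimal machine. -/
def Optimal (U : ℕ →. ℕ) : Prop :=
  Partrec U ∧ ∀ T : ℕ →. ℕ, Partrec T → ∃ c, ∀ x y, x ∈ T y → MachineCplx U x ≤ len y + c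

/-- Conditional complexity of `x` given `y` relative to machine `T`. -/
noncomputable def CondCplx (T : ℕ →. ℕ) (x y : ℕ) : ℕ :=
  sInf {n | ∃ z, len z = n ∧ x ∈ T (Nat.pair z y)}

/-- `U` is optimal as a conditional machine. -/
def CondOptimal (U : ℕ →. ℕ) : Prop :=
  Partrec U ∧ ∀ T : ℕ →. ℕ, Partrec T →
    ∃ c, ∀ x y z, x ∈ T (Nat.pair z y) → CondCplx U x y ≤ len z + c

/-- `y` is a prefix of `z` (as binary strings identified with naturals). -/
def IsPrefix (y z : ℕ) : Prop := ∃ k, (y + 1) * 2 ^ k ≤ z + 1 ∧ z + 1 < (y + 2) * 2 ^ k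

/-- A machine with prefix-free domain. -/
def PrefixFree (T : ℕ →. ℕ) : Prop :=
  ∀ y z, (T y).Dom → (T z).Dom → IsPrefix y z → y = z

/-- `U` is an optimal prefix-free machine. -/
def PrefixOptimal (U : ℕ →. ℕ) : Prop :=
  Partrec U ∧ PrefixFree U ∧ ∀ T : ℕ →. ℕ, Partrec T → PrefixFree T →
    ∃ c, ∀ x y, x ∈ T y → MachineCplx U x ≤ len y + c

/-- Upper semicomputability: `A` is a pointwise limit of a computable
nonincreasing sequence of approximations. -/
def UpperSemicomputable (A : ℕ → ℕ) : Prop :=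
  ∃ F : ℕ → ℕ → ℕ, Computable₂ F ∧ (∀ x, Antitone (F x)) ∧ ∀ x, A x = ⨅ s, F x s

/-- Uniform upper semicomputability for a two-argument function. -/
def UpperSemicomputable₂ (B : ℕ → ℕ → ℕ) : Prop :=
  UpperSemicomputable (fun p => B (Nat.unpair p).1 (Nat.unpair p).2)

/-- Solovay's function `α` built from a complexity function `K`. -/
noncomputable def solovay (K : ℕ → ℕ) (n : ℕ) : ℕ := sInf {m | ∃ i, n < i ∧ K i = m}

/-- An order: total, non-decreasing, unbounded. -/
def IsOrder (h : ℕ → ℕ) : Prop := Monotone h ∧ ∀ m, ∃ n, m ≤ h n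

/-- Sub-linearity: `f n = o(n)`. -/
def Sublinear (f : ℕ → ℕ) : Prop :=
  Tendsto (fun n => (f n : ℝ) / n) atTop (nhds 0)

/-- `p_f = max {n | f n ≥ n}`. -/
noncomputable def pstar (f : ℕ → ℕ) : ℕ := sSup {n | n ≤ f n}

/-- The star-operator: `f* n = min {k | f^[k] n ≤ p_f}`. -/
noncomputable def starOp (f : ℕ → ℕ) (n : ℕ) : ℕ := sInf {k | f^[k] n ≤ pstar f}

end KC

open KC


namespace CLE
open Computable

/-- `F (unpair p).1 (unpair p).2 ≤ n`? -/
def hit (F : ℕ → ℕ → ℕ) (n p : ℕ) : Bool :=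
  decide (F (Nat.unpair p).1 (Nat.unpair p).2 ≤ n)

/-- has some `q < p` with first coordinate `x` been hit at level `n`? -/
def seen (F : ℕ → ℕ → ℕ) (n x : ℕ) : ℕ → Bool
  | 0 => false
  | p + 1 => seen F n x p || (decide ((Nat.unpair p).1 = x) && hit F n p)

def newB (F : ℕ → ℕ → ℕ) (n p : ℕ) : Bool :=
  hit F n p && !seen F n (Nat.unpair p).1 p

def cnt (F : ℕ → ℕ → ℕ) (n : ℕ) : ℕ → ℕ
  | 0 => 0
  | p + 1 => cnt F n p + cond (newB F n p) 1 0

def cntL (m : ℕ) : ℕ → ℕ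
  | 0 => 0
  | t + 1 => cntL m t + cond (decide (2 ^ (t + 1) ≤ m)) 1 0

def lenf (y : ℕ) : ℕ := cntL (y + 1) (y + 1)

def pred (F : ℕ → ℕ → ℕ) (d y p : ℕ) : Bool :=
  newB F (lenf y - d) p && decide (cnt F (lenf y - d) p = y + 1 - 2 ^ lenf y)

def T (F : ℕ → ℕ → ℕ) (d : ℕ) : ℕ →. ℕ := fun y =>
  (Nat.rfind fun p => Part.some (pred F d y p)).map fun p => (Nat.unpair p).1

variable {F : ℕ → ℕ → ℕ}

lemma hitC (hF : Computable₂ F) : Computable₂ (hit F) := by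
  have h1 : Computable fun q : ℕ × ℕ => F (Nat.unpair q.2).1 (Nat.unpair q.2).2 :=
    hF.comp (fst.comp (Primrec.unpair.to_comp.comp snd))
      (snd.comp (Primrec.unpair.to_comp.comp snd))
  exact ((Primrec₂.to_comp Primrec.nat_le.decide).comp h1 fst).to₂

lemma seenC (hF : Computable₂ F) :
    Computable fun q : (ℕ × ℕ) × ℕ => seen F q.1.1 q.1.2 q.2 := by
  have heq : Computable fun r : ((ℕ × ℕ) × ℕ) × ℕ × Bool =>
      decide ((Nat.unpair r.2.1).1 = r.1.1.2) :=
    (Primrec₂.to_comp Primrec.eq.decide).comp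
      (fst.comp (Primrec.unpair.to_comp.comp (fst.comp snd)))
      (snd.comp (fst.comp fst))
  have hhit : Computable fun r : ((ℕ × ℕ) × ℕ) × ℕ × Bool =>
      hit F r.1.1.1 r.2.1 :=
    (hitC hF).comp (fst.comp (fst.comp fst)) (fst.comp snd)
  have hh : Computable₂ fun (a : (ℕ × ℕ) × ℕ) (y : ℕ × Bool) =>
      (y.2 || (decide ((Nat.unpair y.1).1 = a.1.2) && hit F a.1.1 y.1) : Bool) :=
    ((Primrec₂.to_comp Primrec.or).comp (snd.comp snd)
      ((Primrec₂.to_comp Primrec.and).comp heq hhit)).to₂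
  exact (Computable.nat_rec snd (const false) hh).of_eq fun a => by
    induction a.2 with
    | zero => rfl
    | succ p ih => simp only [seen, ← ih]

lemma newBC (hF : Computable₂ F) : Computable₂ (newB F) := by
  have hseen : Computable fun q : ℕ × ℕ => seen F q.1 (Nat.unpair q.2).1 q.2 :=
    (seenC hF).comp ((fst.pair (fst.comp (Primrec.unpair.to_comp.comp snd))).pair snd)
  exact ((Primrec₂.to_comp Primrec.and).comp ((hitC hF).comp fst snd)
    (Primrec.not.to_comp.comp hseen)).to₂

lemma cntC (hF : Computable₂ F) : Computable₂ (cnt F) := by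
  have hh : Computable₂ fun (a : ℕ × ℕ) (y : ℕ × ℕ) =>
      y.2 + cond (newB F a.1 y.1) 1 0 :=
    ((Primrec₂.to_comp Primrec.nat_add).comp (snd.comp snd)
      (Computable.cond ((newBC hF).comp (fst.comp fst) (fst.comp snd))
        (const 1) (const 0))).to₂
  exact (Computable.nat_rec snd (const 0) hh).of_eq fun a => by
    induction a.2 with
    | zero => rfl
    | succ p ih => simp only [cnt, ← ih]

lemma powC : Computable₂ ((· ^ ·) : ℕ → ℕ → ℕ) :=
  Primrec₂.to_comp ((Primrec₂.unpaired'.mp Nat.Primrec.pow))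

lemma cntLC : Computable₂ cntL := by
  have hh : Computable₂ fun (a : ℕ × ℕ) (y : ℕ × ℕ) =>
      y.2 + cond (decide (2 ^ (y.1 + 1) ≤ a.1)) 1 0 :=
    ((Primrec₂.to_comp Primrec.nat_add).comp (snd.comp snd)
      (Computable.cond ((Primrec₂.to_comp Primrec.nat_le.decide).comp
          (powC.comp (const 2) (succ.comp (fst.comp snd))) (fst.comp fst))
        (const 1) (const 0))).to₂
  exact (Computable.nat_rec snd (const 0) hh).of_eq fun a => by
    induction a.2 with
    | zero => rfl
    | succ p ih => simp only [cntL, ← ih]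

lemma lenfC : Computable lenf := cntLC.comp succ succ

lemma predC (hF : Computable₂ F) (d : ℕ) : Computable₂ (pred F d) := by
  have hn : Computable fun q : ℕ × ℕ => lenf q.1 - d :=
    (Primrec₂.to_comp Primrec.nat_sub).comp (lenfC.comp fst) (const d)
  have hi : Computable fun q : ℕ × ℕ => q.1 + 1 - 2 ^ lenf q.1 :=
    (Primrec₂.to_comp Primrec.nat_sub).comp (succ.comp fst)
      (powC.comp (const 2) (lenfC.comp fst))
  exact ((Primrec₂.to_comp Primrec.and).comp ((newBC hF).comp hn snd)
    ((Primrec₂.to_comp Primrec.eq.decide).comp ((cntC hF).comp hn snd) hi)).to₂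

lemma T_partrec (hF : Computable₂ F) (d : ℕ) : Partrec (T F d) := by
  have h1 : Partrec fun y => Nat.rfind fun p => Part.some (pred F d y p) :=
    Partrec.rfind (predC hF d).partrec₂
  exact h1.map (fst.comp (Primrec.unpair.to_comp.comp snd)).to₂

end CLE

namespace CLE

lemma newB_iff {F : ℕ → ℕ → ℕ} {n p : ℕ} :
    newB F n p = true ↔ (F (Nat.unpair p).1 (Nat.unpair p).2 ≤ n ∧
      ∀ q < p, ¬((Nat.unpair q).1 = (Nat.unpair p).1 ∧
        F (Nat.unpair q).1 (Nat.unpair q).2 ≤ n)) := by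
  have hseen : ∀ x m, seen F n x m = true ↔
      ∃ q < m, (Nat.unpair q).1 = x ∧ F (Nat.unpair q).1 (Nat.unpair q).2 ≤ n := by
    intro x m
    induction m with
    | zero => simp [seen]
    | succ m ih =>
      simp only [seen, Bool.or_eq_true, Bool.and_eq_true, decide_eq_true_iff, ih, hit]
      constructor
      · rintro (⟨q, hq, h⟩ | h)
        · exact ⟨q, by omega, h⟩
        · exact ⟨m, by omega, h⟩
      · rintro ⟨q, hq, h⟩
        rcases Nat.lt_succ_iff_lt_or_eq.1 hq with h' | rfl
        · exact Or.inl ⟨q, h', h⟩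
        · exact Or.inr h
  simp only [newB, Bool.and_eq_true, Bool.not_eq_true', hit, decide_eq_true_iff]
  constructor
  · rintro ⟨h1, h2⟩
    refine ⟨h1, fun q hq hcon => ?_⟩
    have : seen F n (Nat.unpair p).1 p = true := (hseen _ p).2 ⟨q, hq, hcon⟩
    rw [this] at h2; exact Bool.noConfusion h2
  · rintro ⟨h1, h2⟩
    refine ⟨h1, ?_⟩
    by_contra h
    have h' : seen F n (Nat.unpair p).1 p = true := by
      cases hx : seen F n (Nat.unpair p).1 p
      · exact absurd hx h
      · rfl
    obtain ⟨q, hq, hc⟩ := (hseen _ p).1 h'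
    exact h2 q hq hc

lemma cnt_eq_card (F : ℕ → ℕ → ℕ) (n p : ℕ) :
    cnt F n p = ((Finset.range p).filter fun q => newB F n q = true).card := by
  induction p with
  | zero => simp [cnt]
  | succ p ih =>
    rw [Finset.range_add_one, Finset.filter_insert]
    cases hb : newB F n p
    · rw [if_neg (by simp [hb])]
      simp [cnt, hb, ih]
    · rw [if_pos rfl, Finset.card_insert_of_notMem (by simp)]
      simp [cnt, hb, ih]

lemma cnt_mono (F : ℕ → ℕ → ℕ) (n : ℕ) : Monotone (cnt F n) :=
  monotone_nat_of_le_succ fun p => by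
    simp only [cnt]; exact Nat.le_add_right _ _

lemma cnt_le {F : ℕ → ℕ → ℕ} {A : ℕ → ℕ} (hA : ∀ x s, A x ≤ F x s) {n N : ℕ}
    (hfin : {x | A x ≤ n}.Finite) (hcard : {x | A x ≤ n}.ncard ≤ N) (p : ℕ) :
    cnt F n p ≤ N := by
  rw [cnt_eq_card]
  refine le_trans ?_ (le_trans (Set.ncard_eq_toFinset_card _ hfin).symm.le hcard)
  apply Finset.card_le_card_of_injOn (fun q => (Nat.unpair q).1)
  · intro q hq
    simp only [Finset.coe_filter, Finset.mem_filter] at hq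
    have h1 := (newB_iff.1 hq.2).1
    exact hfin.mem_toFinset.2 (le_trans (hA _ _) h1)
  · intro q hq q' hq' heq
    simp only [Finset.coe_filter, Set.mem_setOf_eq] at hq hq'
    by_contra hne
    rcases Nat.lt_or_ge q q' with h | h
    · exact (newB_iff.1 hq'.2).2 q h ⟨heq, (newB_iff.1 hq.2).1⟩
    · have h' : q' < q := by omega
      exact (newB_iff.1 hq.2).2 q' h' ⟨heq.symm, (newB_iff.1 hq'.2).1⟩

lemma cntL_eq (m : ℕ) (hm : m ≠ 0) (t : ℕ) : cntL m t = min t (Nat.log 2 m) := by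
  induction t with
  | zero => simp [cntL]
  | succ t ih =>
    have hiff : 2 ^ (t + 1) ≤ m ↔ t + 1 ≤ Nat.log 2 m :=
      (Nat.le_log_iff_pow_le one_lt_two hm).symm
    simp only [cntL, ih]
    rcases le_or_gt (2 ^ (t + 1)) m with h | h
    · have ht : t + 1 ≤ Nat.log 2 m := hiff.1 h
      rw [decide_eq_true h]
      simp only [cond_true]
      omega
    · have ht : ¬(t + 1 ≤ Nat.log 2 m) := fun hc => absurd (hiff.2 hc) (by omega)
      rw [decide_eq_false (by omega)]
      simp only [cond_false]
      omega

lemma lenf_eq (y : ℕ) : lenf y = Nat.log 2 (y + 1) := by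
  rw [lenf, cntL_eq (y + 1) (by omega)]
  exact min_eq_right (le_trans (Nat.log_le_self 2 (y + 1)) (by omega))

end CLE


theorem C_le_of_usc_counting (U : ℕ →. ℕ) (hU : Optimal U) (A : ℕ → ℕ)
    (h1 : UpperSemicomputable A)
    (h4 : ∃ d, ∀ n, {x | A x ≤ n}.Finite ∧ {x | A x ≤ n}.ncard ≤ 2 ^ (n + d)) :
    ∃ c, ∀ x, MachineCplx U x ≤ A x + c := by
  obtain ⟨F, hF, hanti, hAF⟩ := h1
  obtain ⟨d, hd⟩ := h4
  have hA_le : ∀ x s, A x ≤ F x s := fun x s => by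
    rw [hAF]; exact Nat.sInf_le ⟨s, rfl⟩
  have hA_ex : ∀ x, ∃ s, F x s = A x := fun x => by
    rw [hAF]
    exact Nat.sInf_mem (Set.range_nonempty (F x))
  obtain ⟨c, hc⟩ := hU.2 (CLE.T F d) (CLE.T_partrec hF d)
  refine ⟨d + c, fun x => ?_⟩
  set n := A x with hn
  obtain ⟨s, hs⟩ := hA_ex x
  have hSne : {q | (Nat.unpair q).1 = x ∧
      F (Nat.unpair q).1 (Nat.unpair q).2 ≤ n}.Nonempty :=
    ⟨Nat.pair x s, by simp [Nat.unpair_pair]; exact hs.le⟩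
  set p := sInf {q | (Nat.unpair q).1 = x ∧
      F (Nat.unpair q).1 (Nat.unpair q).2 ≤ n} with hp
  have hpmem := Nat.sInf_mem hSne
  obtain ⟨hpx, hpF⟩ := hpmem
  have hnew : CLE.newB F n p = true := by
    rw [CLE.newB_iff]
    refine ⟨hpF, fun q hq hcon => ?_⟩
    exact Nat.notMem_of_lt_sInf hq ⟨hcon.1.trans hpx, hcon.2⟩
  set i := CLE.cnt F n p with hi
  have hcnt_succ : CLE.cnt F n (p + 1) = i + 1 := by
    simp [CLE.cnt, hnew, hi]
  have hiub : i + 1 ≤ 2 ^ (n + d) := by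
    rw [← hcnt_succ]
    exact CLE.cnt_le hA_le (hd n).1 (hd n).2 (p + 1)
  have hpow : 1 ≤ 2 ^ (n + d) := Nat.one_le_two_pow
  set y := 2 ^ (n + d) - 1 + i with hy
  have hy1 : y + 1 = 2 ^ (n + d) + i := by omega
  have hleny : Nat.log 2 (y + 1) = n + d := by
    apply Nat.log_eq_of_pow_le_of_lt_pow (by omega)
    rw [pow_succ]
    omega
  have hlenf : CLE.lenf y = n + d := by rw [CLE.lenf_eq, hleny]
  have hdec1 : CLE.lenf y - d = n := by omega
  have hdec2 : y + 1 - 2 ^ CLE.lenf y = i := by rw [hlenf]; omega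
  have hpred_p : CLE.pred F d y p = true := by
    rw [CLE.pred, hdec1, hdec2]
    simp [hnew, hi]
  have hleast : ∀ m < p, CLE.pred F d y m = false := by
    intro m hm
    cases hpm : CLE.pred F d y m
    · rfl
    · exfalso
      rw [CLE.pred, hdec1, hdec2, Bool.and_eq_true, decide_eq_true_iff] at hpm
      obtain ⟨hmn, hmc⟩ := hpm
      have h1 : CLE.cnt F n (m + 1) = CLE.cnt F n m + 1 := by
        simp [CLE.cnt, hmn]
      have h2 : CLE.cnt F n (m + 1) ≤ CLE.cnt F n p :=
        CLE.cnt_mono F n (by omega)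
      omega
  have hmem : p ∈ Nat.rfind fun q => Part.some (CLE.pred F d y q) :=
    Nat.mem_rfind.2 ⟨by simp [hpred_p], fun {m} hm => by simp [hleast m hm]⟩
  have hxT : x ∈ CLE.T F d y := by
    rw [CLE.T]
    exact Part.mem_map_iff _ |>.2 ⟨p, hmem, hpx⟩
  have hfin := hc x y hxT
  have hlen : len y = n + d := by rw [len, hleny]
  rw [hlen] at hfin
  omega
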